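/- Let Z1, Z2 ⊆ K with |K| = 20, |Z1| ≤ 10, |Z2| ≤ 10, and |Z1' ∩ Z2'| ≤ 5 for given Z1' ⊆ Z1 ∩ Z2, Z2' ⊆ Z1 ∩ Z2. Then K can be partitioned into two 10-element sets Z⁻ and Z⁺ such that |Z⁻ \ Z1| ≥ 5 and |Z⁺ \ Z2| ≥ 5. -/

import Mathlib

/-- Given `Z1, Z2 ⊆ K` with `|K| = 20`, `|Z1| ≤ 10`, `|Z2| ≤ 10`, and
`|Z1' ∩ Z2'| ≤ 5` for given `Z1', Z2' ⊆ Z1 ∩ Z2`, the palette `K` can be partitioned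
into two 10-element sets `Z⁻` and `Z⁺` with `|Z⁻ \ Z1| ≥ 5` and `|Z⁺ \ Z2| ≥ 5`. -/
theorem stmt_19 (K Z1 Z2 Z1' Z2' : Finset ℕ) (hK : K.card = 20)
    (h1 : Z1 ⊆ K) (h2 : Z2 ⊆ K) (hc1 : Z1.card ≤ 10) (hc2 : Z2.card ≤ 10)
    (h1' : Z1' ⊆ Z1 ∩ Z2) (h2' : Z2' ⊆ Z1 ∩ Z2) (h12' : (Z1' ∩ Z2').card ≤ 5) :
    ∃ Zm Zp : Finset ℕ, Zm ∪ Zp = K ∧ Disjoint Zm Zp ∧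
      Zm.card = 10 ∧ Zp.card = 10 ∧
      5 ≤ (Zm \ Z1).card ∧ 5 ≤ (Zp \ Z2).card := by
  classical
  set D := Z2 \ Z1 with hD
  set I := Z1 ∩ Z2 with hI
  set O := K \ (Z1 ∪ Z2) with hO
  have hDI : D.card + I.card = Z2.card := by
    rw [hD, hI, Finset.inter_comm]
    exact Finset.card_sdiff_add_card_inter Z2 Z1
  have hU : (Z1 ∪ Z2).card + I.card = Z1.card + Z2.card :=
    Finset.card_union_add_card_inter Z1 Z2
  have hUK : Z1 ∪ Z2 ⊆ K := Finset.union_subset h1 h2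
  have hU20 : (Z1 ∪ Z2).card ≤ 20 := hK ▸ Finset.card_le_card hUK
  have hOc : O.card = 20 - (Z1 ∪ Z2).card := by
    rw [hO, Finset.card_sdiff_of_subset hUK, hK]
  obtain ⟨S, hSI, hScard⟩ := Finset.exists_subset_card_eq (s := I) (n := min I.card 5) (min_le_left _ _)
  have hsmin : S.card ≤ I.card ∧ S.card ≤ 5 ∧ (S.card = I.card ∨ S.card = 5) := by
    rw [hScard]; omega
  obtain ⟨R, hRO, hRcard⟩ := Finset.exists_subset_card_eq (s := O) (n := 10 - D.card - S.card) (by omega)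
  have hSZ1 : S ⊆ Z1 := hSI.trans Finset.inter_subset_left
  have hSZ2 : S ⊆ Z2 := hSI.trans Finset.inter_subset_right
  have hRZ : ∀ x ∈ R, x ∈ K ∧ x ∉ Z1 ∧ x ∉ Z2 := by
    intro x hx
    have hh := hRO hx
    rw [hO, Finset.mem_sdiff, Finset.mem_union] at hh
    tauto
  have hDS : Disjoint D S := Finset.disjoint_left.mpr
    (fun x hx hxS => (Finset.mem_sdiff.mp hx).2 (hSZ1 hxS))
  have hDSR : Disjoint (D ∪ S) R := by
    rw [Finset.disjoint_left]
    intro x hx hxR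
    rcases Finset.mem_union.mp hx with h | h
    · exact (hRZ x hxR).2.2 (Finset.mem_sdiff.mp h).1
    · exact (hRZ x hxR).2.1 (hSZ1 h)
  have hDR : Disjoint D R := by
    rw [Finset.disjoint_left]
    intro x hx hxR
    exact (hRZ x hxR).2.2 (Finset.mem_sdiff.mp hx).1
  set Zm := D ∪ S ∪ R with hZm
  have hZmK : Zm ⊆ K := by
    intro x hx
    rcases Finset.mem_union.mp hx with h | h
    · rcases Finset.mem_union.mp h with h' | h'
      · exact h2 (Finset.mem_sdiff.mp h').1
      · exact h1 (hSZ1 h')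
    · exact (hRZ x h).1
  have hZmcard : Zm.card = 10 := by
    rw [hZm, Finset.card_union_of_disjoint hDSR, Finset.card_union_of_disjoint hDS, hRcard]
    omega
  refine ⟨Zm, K \ Zm, Finset.union_sdiff_of_subset hZmK, Finset.disjoint_sdiff, hZmcard, ?_, ?_, ?_⟩
  · rw [Finset.card_sdiff_of_subset hZmK, hK, hZmcard]
  · -- D ∪ R ⊆ Zm \ Z1
    have hsub : D ∪ R ⊆ Zm \ Z1 := by
      intro x hx
      rw [Finset.mem_sdiff]
      rcases Finset.mem_union.mp hx with h | h
      · exact ⟨Finset.mem_union_left _ (Finset.mem_union_left _ h),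
          (Finset.mem_sdiff.mp h).2⟩
      · exact ⟨Finset.mem_union_right _ h, (hRZ x h).2.1⟩
    have := Finset.card_le_card hsub
    rw [Finset.card_union_of_disjoint hDR, hRcard] at this
    omega
  · -- (K \ Z2) \ R ⊆ (K \ Zm) \ Z2
    have hsub : (K \ Z2) \ R ⊆ (K \ Zm) \ Z2 := by
      intro x hx
      rw [Finset.mem_sdiff, Finset.mem_sdiff] at hx
      obtain ⟨⟨hxK, hxZ2⟩, hxR⟩ := hx
      rw [Finset.mem_sdiff, Finset.mem_sdiff]
      refine ⟨⟨hxK, ?_⟩, hxZ2⟩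
      intro hxm
      rcases Finset.mem_union.mp hxm with h | h
      · rcases Finset.mem_union.mp h with h' | h'
        · exact hxZ2 (Finset.mem_sdiff.mp h').1
        · exact hxZ2 (hSZ2 h')
      · exact hxR h
    have hRK : R ⊆ K \ Z2 := by
      intro x hx
      rw [Finset.mem_sdiff]
      exact ⟨(hRZ x hx).1, (hRZ x hx).2.2⟩
    have hc := Finset.card_le_card hsub
    rw [Finset.card_sdiff_of_subset hRK, Finset.card_sdiff_of_subset h2, hK, hRcard] at hc
    omega
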